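/- The F-span of the dn+1 elements ∏_{j=1}^n x_j together with x_k^a·y_k·∏_{j=k+1}^n x_j for 1 ≤ k ≤ n and 0 ≤ a ≤ d−1 is a Kummer space of degree d and has F-dimension exactly dn+1. -/

import Mathlib

open Polynomial


section SRel
variable {F A : Type*} [Field F] [Ring A] [Algebra F A]

/-- `u * v = c • (v * u)`. -/
def SRel (c : F) (u v : A) : Prop := u * v = c • (v * u)

theorem SRel.of_scalar_eq {c c' : F} {u v : A} (h : SRel c u v) (hc : c = c') : SRel c' u v :=
  hc ▸ h

theorem SRel.one_of_commute {u v : A} (h : Commute u v) : SRel (1 : F) u v := by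
  simp [SRel, h.eq]

theorem SRel.mul_left {c c' : F} {u v w : A} (h1 : SRel c u w) (h2 : SRel c' v w) :
    SRel (c * c') (u * v) w := by
  unfold SRel at *
  rw [mul_assoc, h2, mul_smul_comm, ← mul_assoc, h1, smul_mul_assoc, smul_smul, mul_assoc,
    mul_comm c' c]

theorem SRel.mul_right {c c' : F} {u v w : A} (h1 : SRel c u v) (h2 : SRel c' u w) :
    SRel (c * c') u (v * w) := by
  unfold SRel at *
  rw [← mul_assoc, h1, smul_mul_assoc, mul_assoc, h2, mul_smul_comm, smul_smul, ← mul_assoc]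

theorem SRel.smul_left {c : F} {u v : A} (h : SRel c u v) (t : F) : SRel c (t • u) v := by
  unfold SRel at *
  rw [smul_mul_assoc, h, mul_smul_comm, smul_comm]

theorem SRel.smul_right {c : F} {u v : A} (h : SRel c u v) (t : F) : SRel c u (t • v) := by
  unfold SRel at *
  rw [mul_smul_comm, h, smul_mul_assoc, smul_comm]

theorem SRel.add_left {c : F} {u v w : A} (h1 : SRel c u w) (h2 : SRel c v w) :
    SRel c (u + v) w := by
  unfold SRel at *
  rw [add_mul, h1, h2, mul_add, smul_add]

theorem SRel.zero_left {c : F} {v : A} : SRel c (0 : A) v := by simp [SRel]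

theorem SRel.sum_left {c : F} {ι : Type*} {s : Finset ι} {f : ι → A} {v : A}
    (h : ∀ i ∈ s, SRel c (f i) v) : SRel c (∑ i ∈ s, f i) v := by
  classical
  induction s using Finset.induction_on with
  | empty => simpa using (SRel.zero_left : SRel c (0 : A) v)
  | insert _ _ hni ih =>
    rw [Finset.sum_insert hni]
    exact (h _ (Finset.mem_insert_self _ _)).add_left
      (ih fun i hi => h i (Finset.mem_insert_of_mem hi))

theorem SRel.one_right {u : A} : SRel (1 : F) u (1 : A) := by simp [SRel]

theorem SRel.one_left {v : A} : SRel (1 : F) (1 : A) v := by simp [SRel]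

theorem SRel.pow_right {c : F} {u v : A} (h : SRel c u v) (m : ℕ) : SRel (c ^ m) u (v ^ m) := by
  induction m with
  | zero => simpa using (SRel.one_right : SRel (1 : F) u (1 : A))
  | succ m ih => rw [pow_succ, pow_succ]; exact ih.mul_right h

theorem SRel.pow_left {c : F} {u v : A} (h : SRel c u v) (m : ℕ) : SRel (c ^ m) (u ^ m) v := by
  induction m with
  | zero => simpa using (SRel.one_left : SRel (1 : F) (1 : A) v)
  | succ m ih => rw [pow_succ, pow_succ]; exact ih.mul_left h

theorem SRel.inv {c : F} {u v : A} (h : SRel c u v) (hc : c ≠ 0) : SRel c⁻¹ v u := by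
  unfold SRel at *
  rw [h, smul_smul, inv_mul_cancel₀ hc, one_smul]

theorem SRel.list_right {u : A} {ι : Type*} (l : List ι) (f : ι → A) (c : ι → F)
    (h : ∀ i ∈ l, SRel (c i) u (f i)) :
    SRel ((l.map c).prod) u ((l.map f).prod) := by
  induction l with
  | nil => simpa using (SRel.one_right : SRel (1 : F) u (1 : A))
  | cons i l ih =>
    simp only [List.map_cons, List.prod_cons]
    exact (h i (List.mem_cons_self)).mul_right (ih fun j hj => h j (List.mem_cons_of_mem _ hj))

theorem SRel.list_left {v : A} {ι : Type*} (l : List ι) (f : ι → A) (c : ι → F)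
    (h : ∀ i ∈ l, SRel (c i) (f i) v) :
    SRel ((l.map c).prod) ((l.map f).prod) v := by
  induction l with
  | nil => simpa using (SRel.one_left : SRel (1 : F) (1 : A) v)
  | cons i l ih =>
    simp only [List.map_cons, List.prod_cons]
    exact (h i (List.mem_cons_self)).mul_left (ih fun j hj => h j (List.mem_cons_of_mem _ hj))

end SRel

section Misc
variable {F A : Type*} [Field F] [Ring A] [Algebra F A]

theorem map_prod_indicator {ι : Type*} [DecidableEq ι] (l : List ι) (c : ι → F) (j : ι)
    (h : ∀ i ∈ l, i ≠ j → c i = 1) : (l.map c).prod = c j ^ (l.count j) := by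
  induction l with
  | nil => simp
  | cons i l ih =>
    simp only [List.map_cons, List.prod_cons]
    by_cases hij : i = j
    · subst hij
      rw [List.count_cons_self, pow_succ,
        ih fun i hi hne => h i (List.mem_cons_of_mem _ hi) hne, mul_comm]
    · rw [List.count_cons_of_ne hij,
        h i (List.mem_cons_self) hij, one_mul,
        ih fun i hi hne => h i (List.mem_cons_of_mem _ hi) hne]

theorem mem_drop_finRange {n : ℕ} (m : ℕ) (j : Fin n) :
    j ∈ (List.finRange n).drop m ↔ m ≤ (j : ℕ) := by
  constructor
  · intro hmem
    obtain ⟨i, hi, hEq⟩ := List.mem_iff_getElem.1 hmem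
    rw [List.getElem_drop] at hEq
    have := congrArg Fin.val hEq
    simp only [List.getElem_finRange, Fin.coe_cast] at this
    omega
  · intro hle
    have hlt : (j : ℕ) - m < (List.drop m (List.finRange n)).length := by
      simp only [List.length_drop, List.length_finRange]
      omega
    refine List.mem_iff_getElem.2 ⟨(j : ℕ) - m, hlt, ?_⟩
    rw [List.getElem_drop]
    apply Fin.ext
    simp only [List.getElem_finRange, Fin.coe_cast]
    omega

theorem count_drop_finRange {n : ℕ} (m : ℕ) (j : Fin n) :
    ((List.finRange n).drop m).count j = if m ≤ (j : ℕ) then 1 else 0 := by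
  split_ifs with h
  · exact List.count_eq_one_of_mem
      ((List.nodup_finRange n).sublist (List.drop_sublist m _))
      ((mem_drop_finRange m j).2 h)
  · exact List.count_eq_zero_of_not_mem (fun hc => h ((mem_drop_finRange m j).1 hc))

theorem commute_aeval {z x : A} (h : Commute z x) (p : F[X]) : Commute z (aeval x p) := by
  induction p using Polynomial.induction_on' with
  | add p q hp hq => rw [map_add]; exact hp.add_right hq
  | monomial m t =>
    rw [aeval_monomial]
    exact (Algebra.commute_algebraMap_right t z).mul_right (h.pow_right m)

theorem list_pow_mem (d : ℕ) (l : List A)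
    (hc : ∀ a ∈ l, ∀ b ∈ l, Commute a b) (hm : ∀ a ∈ l, a ^ d ∈ (⊥ : Subalgebra F A)) :
    l.prod ^ d ∈ (⊥ : Subalgebra F A) := by
  induction l with
  | nil => simpa using Subalgebra.one_mem _
  | cons a l ih =>
    rw [List.prod_cons, (Commute.list_prod_right _ _ fun b hb =>
      hc a (List.mem_cons_self) b (List.mem_cons_of_mem _ hb)).mul_pow]
    exact mul_mem (hm a (List.mem_cons_self))
      (ih (fun a ha b hb => hc a (List.mem_cons_of_mem _ ha) b (List.mem_cons_of_mem _ hb))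
        fun a ha => hm a (List.mem_cons_of_mem _ ha))

theorem SRel.conj_eq {A : Type*} [DivisionRing A] [Algebra F A] {c : F} {g u : A}
    (h : SRel c g u) (hg : g ≠ 0) : g * u * g⁻¹ = c • u := by
  rw [h, smul_mul_assoc, mul_assoc, mul_inv_cancel₀ hg, mul_one]

end Misc
section Scale
variable {F : Type*} [Field F]

noncomputable def scaleHom (c : F) : F[X] →ₐ[F] F[X] := aeval (C c * X)

theorem scaleHom_monomial (c t : F) (a : ℕ) :
    scaleHom c (monomial a t) = monomial a (t * c ^ a) := by
  rw [scaleHom, aeval_monomial, mul_pow, ← C_pow, algebraMap_eq, ← mul_assoc, ← C_mul,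
    C_mul_X_pow_eq_monomial]

theorem scaleHom_coeff (c : F) (p : F[X]) (m : ℕ) :
    (scaleHom c p).coeff m = c ^ m * p.coeff m := by
  induction p using Polynomial.induction_on' with
  | add p q hp hq => simp only [map_add, coeff_add, hp, hq, mul_add]
  | monomial a t =>
    rw [scaleHom_monomial, coeff_monomial, coeff_monomial]
    by_cases h : a = m
    · subst h; rw [if_pos rfl, if_pos rfl]; ring
    · rw [if_neg h, if_neg h, mul_zero]

theorem scaleHom_scaleHom (c c' : F) (p : F[X]) :
    scaleHom c (scaleHom c' p) = scaleHom (c * c') p :=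
  Polynomial.ext fun m => by simp [scaleHom_coeff, mul_pow, mul_assoc]

theorem scaleHom_one (p : F[X]) : scaleHom (1 : F) p = p :=
  Polynomial.ext fun m => by simp [scaleHom_coeff]

variable {A : Type*} [Ring A] [Algebra F A]

theorem y_aeval {x y : A} {c : F} (h : SRel c y x) (p : F[X]) :
    y * aeval x p = aeval x (scaleHom c p) * y := by
  induction p using Polynomial.induction_on' with
  | add p q hp hq => rw [map_add, map_add, map_add, mul_add, add_mul, hp, hq]
  | monomial a t =>
    have hpow : y * x ^ a = c ^ a • (x ^ a * y) := h.pow_right a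
    rw [scaleHom_monomial, aeval_monomial, aeval_monomial, ← Algebra.smul_def,
      ← Algebra.smul_def, mul_smul_comm, hpow, smul_smul, smul_mul_assoc]

theorem ypow_aeval {x y : A} {c : F} (h : SRel c y x) (m : ℕ) (p : F[X]) :
    y ^ m * aeval x p = aeval x (scaleHom (c ^ m) p) * y ^ m := by
  induction m generalizing p with
  | zero => simp [scaleHom_one]
  | succ m ih =>
    calc y ^ (m + 1) * aeval x p = y * (y ^ m * aeval x p) := by rw [pow_succ', mul_assoc]
      _ = y * (aeval x (scaleHom (c ^ m) p) * y ^ m) := by rw [ih]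
      _ = (y * aeval x (scaleHom (c ^ m) p)) * y ^ m := by rw [mul_assoc]
      _ = (aeval x (scaleHom c (scaleHom (c ^ m) p)) * y) * y ^ m := by rw [y_aeval h]
      _ = aeval x (scaleHom (c ^ (m + 1)) p) * y ^ (m + 1) := by
          rw [scaleHom_scaleHom, mul_assoc, ← pow_succ', ← pow_succ']

theorem rearr {A : Type*} [Ring A] (a b c e : A) : a * b * (c * e) = a * (b * c) * e := by
  rw [mul_assoc, ← mul_assoc b c e, ← mul_assoc]

theorem aeval_mul_y_pow {x y : A} {c : F} (h : SRel c y x) (m : ℕ) (p : F[X]) :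
    (aeval x p * y) ^ m = aeval x (∏ j ∈ Finset.range m, scaleHom (c ^ j) p) * y ^ m := by
  induction m with
  | zero => simp
  | succ m ih =>
    calc (aeval x p * y) ^ (m + 1)
        = (aeval x p * y) ^ m * (aeval x p * y) := pow_succ _ _
      _ = aeval x (∏ j ∈ Finset.range m, scaleHom (c ^ j) p) * y ^ m * (aeval x p * y) := by
          rw [ih]
      _ = aeval x (∏ j ∈ Finset.range m, scaleHom (c ^ j) p) * (y ^ m * aeval x p) * y :=
          rearr _ _ _ _
      _ = aeval x (∏ j ∈ Finset.range m, scaleHom (c ^ j) p) *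
            (aeval x (scaleHom (c ^ m) p) * y ^ m) * y := by rw [ypow_aeval h]
      _ = aeval x (∏ j ∈ Finset.range m, scaleHom (c ^ j) p) *
            aeval x (scaleHom (c ^ m) p) * (y ^ m * y) := (rearr _ _ _ _).symm
      _ = aeval x (∏ j ∈ Finset.range (m + 1), scaleHom (c ^ j) p) * y ^ (m + 1) := by
          rw [← map_mul, ← Finset.prod_range_succ, pow_succ]

theorem aeval_G_mem {x : A} {α : F} {d : ℕ} (hx : x ^ d = algebraMap F A α)
    {G : F[X]} (hG : ∀ m, ¬ d ∣ m → G.coeff m = 0) :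
    aeval x G ∈ (⊥ : Subalgebra F A) := by
  rw [Polynomial.aeval_eq_sum_range]
  apply Subalgebra.sum_mem
  intro i _
  by_cases hc : G.coeff i = 0
  · rw [hc, zero_smul]; exact zero_mem _
  · have hdvd : d ∣ i := by by_contra hdd; exact hc (hG i hdd)
    have hxi : x ^ i = algebraMap F A (α ^ (i / d)) := by
      conv_lhs => rw [← Nat.div_mul_cancel hdvd, mul_comm, pow_mul, hx, ← map_pow]
    rw [hxi]
    exact Subalgebra.smul_mem _ (Subalgebra.algebraMap_mem _ _) _

theorem coeff_prod_scale_eq_zero {c : F} {d : ℕ} (hd0 : 0 < d)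
    (hc1 : c ^ d = 1) (hcd : ∀ m, c ^ m = 1 → d ∣ m) (p : F[X]) (m : ℕ) (hm : ¬ d ∣ m) :
    (∏ j ∈ Finset.range d, scaleHom (c ^ j) p).coeff m = 0 := by
  by_cases hp : p = 0
  · subst hp
    rw [Finset.prod_eq_zero (Finset.mem_range.2 hd0) (by simp)]
    simp
  set G := ∏ j ∈ Finset.range d, scaleHom (c ^ j) p with hGdef
  have hinv : scaleHom c G = G := by
    have h1 : scaleHom c G = ∏ j ∈ Finset.range d, scaleHom (c ^ (j + 1)) p := by
      rw [hGdef, map_prod]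
      exact Finset.prod_congr rfl fun j _ => by rw [scaleHom_scaleHom, ← pow_succ']
    have h2 : (∏ j ∈ Finset.range d, scaleHom (c ^ (j + 1)) p) * p = G * p := by
      have e0 : scaleHom (c ^ 0) p = p := by rw [pow_zero, scaleHom_one]
      have ed : scaleHom (c ^ d) p = p := by rw [hc1, scaleHom_one]
      calc (∏ j ∈ Finset.range d, scaleHom (c ^ (j + 1)) p) * p
          = (∏ j ∈ Finset.range d, scaleHom (c ^ (j + 1)) p) * scaleHom (c ^ 0) p := by rw [e0]
        _ = ∏ j ∈ Finset.range (d + 1), scaleHom (c ^ j) p :=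
            (Finset.prod_range_succ' (fun j => scaleHom (c ^ j) p) d).symm
        _ = G * scaleHom (c ^ d) p := by rw [Finset.prod_range_succ, hGdef]
        _ = G * p := by rw [ed]
    rw [h1, mul_right_cancel₀ hp h2]
  have hco : c ^ m * G.coeff m = G.coeff m := by
    conv_rhs => rw [← hinv]
    rw [scaleHom_coeff]
  have h2 : (c ^ m - 1) * G.coeff m = 0 := by rw [sub_mul, one_mul, hco, sub_self]
  rcases mul_eq_zero.1 h2 with h3 | h3
  · exact absurd (hcd m (by rwa [sub_eq_zero] at h3)) hm
  · exact h3

theorem aeval_mul_y_pow_mem {x y : A} {c α β : F} {d : ℕ}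
    (hd0 : 0 < d) (h : SRel c y x) (hc1 : c ^ d = 1) (hcd : ∀ m, c ^ m = 1 → d ∣ m)
    (hx : x ^ d = algebraMap F A α) (hy : y ^ d = algebraMap F A β) (p : F[X]) :
    (aeval x p * y) ^ d ∈ (⊥ : Subalgebra F A) := by
  rw [aeval_mul_y_pow h, hy]
  exact mul_mem
    (aeval_G_mem hx fun m hm => coeff_prod_scale_eq_zero hd0 hc1 hcd p m hm)
    (Subalgebra.algebraMap_mem _ _)

end Scale
section QFresh
variable {F : Type*} [Field F]

theorem prod_X_sub_primpow {d : ℕ} (hd0 : 0 < d) {τ : F} (hτ : IsPrimitiveRoot τ d) :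
    ∏ j ∈ Finset.range d, (X - C (τ ^ j)) = X ^ d - 1 := by
  rw [X_pow_sub_one_eq_prod hd0 hτ]
  haveI : NeZero d := ⟨hd0.ne'⟩
  refine Finset.prod_nbij (fun j => τ ^ j) ?_ ?_ ?_ ?_
  · intro j _
    exact (Polynomial.mem_nthRootsFinset hd0 1).2
      (by rw [← pow_mul, mul_comm, pow_mul, hτ.pow_eq_one, one_pow])
  · intro i hi j hj hij
    exact hτ.pow_inj (Finset.mem_range.1 (Finset.mem_coe.1 hi))
      (Finset.mem_range.1 (Finset.mem_coe.1 hj)) hij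
  · intro z hz
    obtain ⟨i, hi, rfl⟩ :=
      hτ.eq_pow_of_pow_eq_one ((Polynomial.mem_nthRootsFinset hd0 1).1 (Finset.mem_coe.1 hz))
    exact ⟨i, Finset.mem_coe.2 (Finset.mem_range.2 hi), rfl⟩
  · intro j _; rfl

theorem prod_X_add_primpow {d : ℕ} (hd0 : 0 < d) {τ : F} (hτ : IsPrimitiveRoot τ d) :
    ∏ j ∈ Finset.range d, (X + C (τ ^ j)) = X ^ d - C ((-1 : F) ^ d) := by
  have hC : (C ((-1 : F) ^ d) : F[X]) = (-1 : F[X]) ^ d := by rw [map_pow, map_neg, map_one]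
  have hne : ((-1 : F[X])) ^ d ≠ 0 := pow_ne_zero _ (neg_ne_zero.2 one_ne_zero)
  apply mul_left_cancel₀ hne
  have key := congrArg (aeval (-X : F[X])) (prod_X_sub_primpow hd0 hτ)
  rw [map_prod, map_sub, map_pow, map_one, aeval_X] at key
  calc (-1 : F[X]) ^ d * ∏ j ∈ Finset.range d, (X + C (τ ^ j))
      = ∏ j ∈ Finset.range d, (-1 : F[X]) * (X + C (τ ^ j)) := by
        rw [Finset.prod_mul_distrib, Finset.prod_const, Finset.card_range]
    _ = ∏ j ∈ Finset.range d, aeval (-X : F[X]) (X - C (τ ^ j)) := by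
        refine Finset.prod_congr rfl fun j _ => ?_
        rw [map_sub, aeval_X, aeval_C, Polynomial.algebraMap_eq]
        ring
    _ = (-X : F[X]) ^ d - 1 := key
    _ = (-1 : F[X]) ^ d * (X ^ d - C ((-1 : F) ^ d)) := by
        have h2 : ((-1 : F[X]) ^ d) * (-1 : F[X]) ^ d = 1 := by
          rw [← mul_pow, neg_mul_neg, one_mul, one_pow]
        rw [hC, mul_sub, h2, neg_pow]

variable {A : Type*} [DivisionRing A] [Algebra F A]

theorem q_freshman {d : ℕ} (hd0 : 0 < d) {ρ : F} (hρ : IsPrimitiveRoot ρ d) {a b : A}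
    (hab : a * b = ρ • (b * a)) : (a + b) ^ d = a ^ d + b ^ d := by
  have hρ0 : ρ ≠ 0 := fun h => by
    have h1 := hρ.pow_eq_one
    rw [h, zero_pow hd0.ne'] at h1
    exact zero_ne_one h1
  by_cases ha : a = 0
  · rw [ha, zero_add, zero_pow hd0.ne', zero_add]
  set u : A := b * a⁻¹ with hu
  have hba : u * a = b := by rw [hu, mul_assoc, inv_mul_cancel₀ ha, mul_one]
  have hau : SRel ρ a u := by
    show a * u = ρ • (u * a)
    rw [hba, hu, ← mul_assoc, hab, smul_mul_assoc, mul_assoc, mul_inv_cancel₀ ha, mul_one]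
  have hinvrel : SRel ρ⁻¹ a⁻¹ b := by
    refine SRel.inv ?_ hρ0
    show b * a⁻¹ = ρ • (a⁻¹ * b)
    have : a⁻¹ * (a * b) * a⁻¹ = a⁻¹ * (ρ • (b * a)) * a⁻¹ := by rw [hab]
    rw [← mul_assoc, inv_mul_cancel₀ ha, one_mul] at this
    rw [this, mul_smul_comm, smul_mul_assoc, mul_assoc, mul_assoc, mul_inv_cancel₀ ha, mul_one]
  have claim1 : ∀ m : ℕ, ((1 + u) * a) ^ m =
      aeval u (∏ j ∈ Finset.range m, (1 + C (ρ ^ j) * X)) * a ^ m := by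
    intro m
    induction m with
    | zero => simp
    | succ m ih =>
      have hstep : a ^ m * (1 + u) = aeval u (1 + C (ρ ^ m) * X) * a ^ m := by
        have hpw : a ^ m * u = ρ ^ m • (u * a ^ m) := hau.pow_left m
        rw [map_add, map_one, map_mul, aeval_C, aeval_X, mul_add, mul_one, hpw, add_mul,
          one_mul, ← Algebra.smul_def, smul_mul_assoc]
      calc ((1 + u) * a) ^ (m + 1)
          = ((1 + u) * a) ^ m * ((1 + u) * a) := pow_succ _ _
        _ = aeval u (∏ j ∈ Finset.range m, (1 + C (ρ ^ j) * X)) * (a ^ m * (1 + u)) * a := by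
            rw [ih, rearr]
        _ = aeval u (∏ j ∈ Finset.range m, (1 + C (ρ ^ j) * X)) *
              (aeval u (1 + C (ρ ^ m) * X) * a ^ m) * a := by rw [hstep]
        _ = aeval u (∏ j ∈ Finset.range (m + 1), (1 + C (ρ ^ j) * X)) * a ^ (m + 1) := by
            rw [← rearr, ← map_mul, ← Finset.prod_range_succ, pow_succ]
  set E : ℕ := ∑ j ∈ Finset.range d, j with hE
  have claim_poly : ∏ j ∈ Finset.range d, ((1 : F[X]) + C (ρ ^ j) * X) =
      C (ρ ^ E) * (X ^ d - C ((-1 : F) ^ d)) := by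
    have hfac : ∀ j, (1 : F[X]) + C (ρ ^ j) * X = C (ρ ^ j) * (X + C ((ρ⁻¹) ^ j)) := by
      intro j
      rw [mul_add, ← C_mul, ← mul_pow, mul_inv_cancel₀ hρ0, one_pow, map_one, add_comm]
    calc ∏ j ∈ Finset.range d, ((1 : F[X]) + C (ρ ^ j) * X)
        = ∏ j ∈ Finset.range d, C (ρ ^ j) * (X + C ((ρ⁻¹) ^ j)) := by
          exact Finset.prod_congr rfl fun j _ => hfac j
      _ = (∏ j ∈ Finset.range d, C (ρ ^ j)) * ∏ j ∈ Finset.range d, (X + C ((ρ⁻¹) ^ j)) :=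
          Finset.prod_mul_distrib
      _ = C (ρ ^ E) * (X ^ d - C ((-1 : F) ^ d)) := by
          rw [prod_X_add_primpow hd0 hρ.inv, ← map_prod, Finset.prod_pow_eq_pow_sum]
  have hconst : ρ ^ E * (-1 : F) ^ d = -1 := by
    have := congrArg (fun q : F[X] => q.eval 0) claim_poly
    simp only [Polynomial.eval_prod, Polynomial.eval_add, Polynomial.eval_one,
      Polynomial.eval_mul, Polynomial.eval_C, Polynomial.eval_X, mul_zero, add_zero,
      Polynomial.eval_sub, Polynomial.eval_pow, Finset.prod_const_one,
      zero_pow hd0.ne', zero_sub, mul_neg] at this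
    linear_combination this
  have claim3 : ∀ m : ℕ, u ^ m =
      (ρ⁻¹) ^ (∑ j ∈ Finset.range m, j) • (b ^ m * (a⁻¹) ^ m) := by
    intro m
    induction m with
    | zero => simp
    | succ m ih =>
      have hpw : (a⁻¹) ^ m * b = (ρ⁻¹) ^ m • (b * (a⁻¹) ^ m) := hinvrel.pow_left m
      calc u ^ (m + 1) = u ^ m * u := pow_succ _ _
        _ = ((ρ⁻¹) ^ (∑ j ∈ Finset.range m, j) • (b ^ m * (a⁻¹) ^ m)) * (b * a⁻¹) := by
            rw [ih, hu]
        _ = (ρ⁻¹) ^ (∑ j ∈ Finset.range m, j) • (b ^ m * ((a⁻¹) ^ m * b) * a⁻¹) := by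
            rw [smul_mul_assoc, rearr]
        _ = ((ρ⁻¹) ^ (∑ j ∈ Finset.range m, j) * (ρ⁻¹) ^ m) •
              (b ^ m * b * ((a⁻¹) ^ m * a⁻¹)) := by
            rw [hpw, mul_smul_comm, smul_mul_assoc, smul_smul, ← rearr]
        _ = (ρ⁻¹) ^ (∑ j ∈ Finset.range (m + 1), j) • (b ^ (m + 1) * (a⁻¹) ^ (m + 1)) := by
            rw [Finset.sum_range_succ, pow_add, pow_succ, pow_succ]
  have hsum : (1 + u) * a = a + b := by rw [add_mul, one_mul, hba]
  have hud : u ^ d * a ^ d = (ρ⁻¹) ^ E • b ^ d := by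
    have hcancel : (a⁻¹ : A) ^ d * a ^ d = 1 := by
      rw [inv_pow, inv_mul_cancel₀ (pow_ne_zero d ha)]
    rw [claim3 d, ← hE, smul_mul_assoc, mul_assoc, hcancel, mul_one]
  calc (a + b) ^ d = ((1 + u) * a) ^ d := by rw [hsum]
    _ = aeval u (C (ρ ^ E) * (X ^ d - C ((-1 : F) ^ d))) * a ^ d := by
        rw [claim1 d, claim_poly]
    _ = algebraMap F A (ρ ^ E) * (u ^ d - algebraMap F A ((-1 : F) ^ d)) * a ^ d := by
        rw [map_mul, map_sub, aeval_C, aeval_C, aeval_X_pow]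
    _ = ρ ^ E • (u ^ d * a ^ d - ((-1 : F) ^ d) • a ^ d) := by
        rw [← Algebra.smul_def, smul_mul_assoc, sub_mul, ← Algebra.smul_def]
    _ = (ρ ^ E * (ρ⁻¹) ^ E) • b ^ d - (ρ ^ E * (-1 : F) ^ d) • a ^ d := by
        rw [hud, smul_sub, smul_smul, smul_smul]
    _ = a ^ d + b ^ d := by
        rw [← mul_pow, mul_inv_cancel₀ hρ0, one_pow, one_smul, hconst, neg_one_smul,
          sub_neg_eq_add, add_comm]

end QFresh
section Indep
variable {F A : Type*} [Field F] [Ring A] [Algebra F A]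

theorem linearIndependent_of_sep {ι : Type*} (v : ι → A) (hv : ∀ i, v i ≠ 0)
    (hsep : ∀ i i', i ≠ i' → ∃ (T : Module.End F A) (μ : ι → F),
      (∀ i'', T (v i'') = μ i'' • v i'') ∧ μ i ≠ μ i') :
    LinearIndependent F v := by
  classical
  rw [linearIndependent_iff']
  intro s
  induction s using Finset.strongInduction with
  | _ s ih =>
    intro g hg i hi
    by_cases hone : ∀ i' ∈ s, i' = i
    · have hsum : ∑ i' ∈ s, g i' • v i' = g i • v i :=
        Finset.sum_eq_single_of_mem i hi fun b hb hbne => absurd (hone b hb) hbne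
      rw [hsum] at hg
      rcases smul_eq_zero.1 hg with h | h
      · exact h
      · exact absurd h (hv i)
    · push_neg at hone
      obtain ⟨i', hi's, hne⟩ := hone
      obtain ⟨T, μ, hT, hμ⟩ := hsep i i' (Ne.symm hne)
      have hTsum : ∑ j ∈ s, (g j * μ j) • v j = 0 := by
        have h0 := congrArg T hg
        rw [map_sum, map_zero] at h0
        rw [← h0]
        exact Finset.sum_congr rfl fun j _ => by rw [map_smul, hT, smul_smul]
      have hs : ∑ j ∈ s, (g j * (μ j - μ i')) • v j = 0 := by
        have : ∑ j ∈ s, (g j * (μ j - μ i')) • v j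
            = ∑ j ∈ s, ((g j * μ j) • v j - μ i' • (g j • v j)) := by
          refine Finset.sum_congr rfl fun j _ => ?_
          rw [mul_sub, sub_smul, smul_smul, mul_comm (μ i') (g j)]
        rw [this, Finset.sum_sub_distrib, hTsum, ← Finset.smul_sum, hg, smul_zero, sub_zero]
      have hzero : ∑ j ∈ s.erase i', (g j * (μ j - μ i')) • v j = 0 := by
        rw [Finset.sum_erase _ (by rw [sub_self, mul_zero, zero_smul])]
        exact hs
      have hres := ih (s.erase i') (Finset.erase_ssubset hi's) _ hzero i
        (Finset.mem_erase.2 ⟨Ne.symm hne, hi⟩)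
      rcases mul_eq_zero.1 hres with h | h
      · exact h
      · exact absurd (sub_eq_zero.1 h) hμ

variable (F) in
noncomputable def conjEnd {A : Type*} [DivisionRing A] [Algebra F A] (g : A) :
    Module.End F A where
  toFun u := g * u * g⁻¹
  map_add' u v := by
    show g * (u + v) * g⁻¹ = g * u * g⁻¹ + g * v * g⁻¹
    rw [mul_add, add_mul]
  map_smul' c u := by
    show g * (c • u) * g⁻¹ = (RingHom.id F) c • (g * u * g⁻¹)
    rw [mul_smul_comm, smul_mul_assoc, RingHom.id_apply]

theorem conjEnd_eigen {A : Type*} [DivisionRing A] [Algebra F A] {c : F} {g u : A}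
    (h : SRel c g u) (hg : g ≠ 0) : conjEnd F g u = c • u :=
  h.conj_eq hg

end Indep
/-- A fixed presentation of a tensor product of `n` cyclic algebras of degree `d`
over `F`: generators `x k`, `y k` with `(x k)^d = αₖ·1`, `(y k)^d = βₖ·1`,
`x k · y k = ρ · (y k · x k)`, generators with different indices commuting, and the
`x k, y k` generating `A` as an `F`-algebra. -/
structure TensorCyclicPresD (F A : Type*) [Field F] [Ring A] [Algebra F A]
    (ρ : F) (d n : ℕ) where
  x : Fin n → A
  y : Fin n → A
  α : Fin n → F
  β : Fin n → F
  α_ne_zero : ∀ k, α k ≠ 0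
  β_ne_zero : ∀ k, β k ≠ 0
  x_pow : ∀ k, x k ^ d = algebraMap F A (α k)
  y_pow : ∀ k, y k ^ d = algebraMap F A (β k)
  xy_rel : ∀ k, x k * y k = ρ • (y k * x k)
  xx_comm : ∀ k l, k ≠ l → Commute (x k) (x l)
  yy_comm : ∀ k l, k ≠ l → Commute (y k) (y l)
  xy_comm : ∀ k l, k ≠ l → Commute (x k) (y l)
  generates : Algebra.adjoin F (Set.range x ∪ Set.range y) = ⊤

set_option maxHeartbeats 1000000

/-- The `F`-span of the `dn + 1` elements `∏_{j=1}^n x_j` together with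
`x_k^a · y_k · ∏_{j=k+1}^n x_j` (for `1 ≤ k ≤ n`, `0 ≤ a ≤ d-1`) is a Kummer space of
degree `d` of dimension exactly `dn + 1`. -/
theorem statement17 {F A : Type*} [Field F] [CharZero F] [DivisionRing A] [Algebra F A]
    (d : ℕ) (hd : 2 ≤ d) (ρ : F) (hρ : IsPrimitiveRoot ρ d
    ) (n : ℕ) (hn : 1 ≤ n)
    (P : TensorCyclicPresD F A ρ d n) (hdim : Module.finrank F A = d ^ (2 * n)) :
    (∀ u ∈ Submodule.span F
        (insert (((List.finRange n).map P.x).prod)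
          {z : A | ∃ (k : Fin n) (a : Fin d),
            z = P.x k ^ (a : ℕ) * P.y k *
              (((List.finRange n).map P.x).drop ((k : ℕ) + 1)).prod}),
      u ^ d ∈ Set.range (algebraMap F A)) ∧
    Module.finrank F (Submodule.span F
        (insert (((List.finRange n).map P.x).prod)
          {z : A | ∃ (k : Fin n) (a : Fin d),
            z = P.x k ^ (a : ℕ) * P.y k *
              (((List.finRange n).map P.x).drop ((k : ℕ) + 1)).prod})) = d * n + 1 := by
  classical
  have hd0 : 0 < d := by omega
  have hρ0 : ρ ≠ 0 := fun h => by
    have h1 := hρ.pow_eq_one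
    rw [h, zero_pow hd0.ne'] at h1
    exact zero_ne_one h1
  have hρi0 : (ρ⁻¹ : F) ≠ 0 := inv_ne_zero hρ0
  have hρ1 : ρ ≠ 1 := hρ.ne_one (by omega)
  have hinj : Function.Injective (algebraMap F A) := (algebraMap F A).injective
  set L : List A := (List.finRange n).map P.x with hL
  set Tl : ℕ → A := fun m => (L.drop m).prod with hTldef
  have hTb : ∀ m, (L.drop m).prod = Tl m := fun m => rfl
  have hX0T : L.prod = Tl 0 := by rw [← hTb 0, List.drop_zero]
  have hLdrop : ∀ m, L.drop m = ((List.finRange n).drop m).map P.x := fun m =>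
    by rw [hL, List.map_drop]
  have hx_ne : ∀ k, P.x k ≠ 0 := by
    intro k h
    have hp := P.x_pow k
    rw [h, zero_pow hd0.ne'] at hp
    exact P.α_ne_zero k (hinj (by rw [map_zero, ← hp]))
  have hy_ne : ∀ k, P.y k ≠ 0 := by
    intro k h
    have hp := P.y_pow k
    rw [h, zero_pow hd0.ne'] at hp
    exact P.β_ne_zero k (hinj (by rw [map_zero, ← hp]))
  have hmemL : ∀ m z, z ∈ L.drop m → ∃ i : Fin n, m ≤ (i : ℕ) ∧ z = P.x i := by
    intro m z hz
    rw [hLdrop m] at hz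
    obtain ⟨i, hi, rfl⟩ := List.mem_map.1 hz
    exact ⟨i, (mem_drop_finRange m i).1 hi, rfl⟩
  have hcxx : ∀ j k, Commute (P.x j) (P.x k) := by
    intro j k
    by_cases h : j = k
    · subst h; exact Commute.refl _
    · exact P.xx_comm j k h
  have hcxT : ∀ (j : Fin n) m, Commute (P.x j) (Tl m) := by
    intro j m
    rw [← hTb m]
    exact Commute.list_prod_right _ _ fun z hz => by
      obtain ⟨i, _, rfl⟩ := hmemL m z hz
      exact hcxx j i
  have hcyT : ∀ (j : Fin n) m, (j : ℕ) < m → Commute (P.y j) (Tl m) := by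
    intro j m hjm
    rw [← hTb m]
    exact Commute.list_prod_right _ _ fun z hz => by
      obtain ⟨i, hi, rfl⟩ := hmemL m z hz
      have hne : i ≠ j := fun h => by rw [h] at hi; omega
      exact (P.xy_comm i j hne).symm
  have hcTT : ∀ m m', Commute (Tl m) (Tl m') := by
    intro m m'
    rw [← hTb m']
    exact Commute.list_prod_right _ _ fun z hz => by
      obtain ⟨i, _, rfl⟩ := hmemL m' z hz
      exact (hcxT i m).symm
  have hsyx : ∀ k, SRel ρ⁻¹ (P.y k) (P.x k) := fun k =>
    SRel.inv (P.xy_rel k : SRel ρ (P.x k) (P.y k)) hρ0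
  have hsyT1 : ∀ (j : Fin n) m, m ≤ (j : ℕ) → SRel ρ⁻¹ (P.y j) (Tl m) := by
    intro j m hm
    have h1 := SRel.list_right (u := P.y j) ((List.finRange n).drop m) P.x
      (fun i => if i = j then ρ⁻¹ else 1) (fun i _ => by
        show SRel (if i = j then ρ⁻¹ else 1) (P.y j) (P.x i)
        by_cases h : i = j
        · subst h; rw [if_pos rfl]; exact hsyx i
        · rw [if_neg h]; exact SRel.one_of_commute (P.xy_comm i j h).symm)
    rw [map_prod_indicator _ _ j (fun i _ hne => if_neg hne), if_pos rfl,
      count_drop_finRange, if_pos hm, pow_one, ← hLdrop m, hTb m] at h1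
    exact h1
  have hsyX0 : ∀ j : Fin n, SRel ρ⁻¹ (P.y j) (Tl 0) := fun j => hsyT1 j 0 (Nat.zero_le _)
  have hTne : ∀ m, Tl m ≠ 0 := by
    intro m
    rw [← hTb m]
    refine List.prod_ne_zero ?_
    intro h0
    obtain ⟨i, _, hEq⟩ := hmemL m 0 h0
    exact hx_ne i hEq.symm
  have hTd : ∀ m, (Tl m) ^ d ∈ (⊥ : Subalgebra F A) := by
    intro m
    rw [← hTb m]
    refine list_pow_mem d _ (fun a ha b hb => ?_) (fun a ha => ?_)
    · obtain ⟨i, _, rfl⟩ := hmemL m a ha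
      obtain ⟨i', _, rfl⟩ := hmemL m b hb
      exact hcxx i i'
    · obtain ⟨i, _, rfl⟩ := hmemL m a ha
      rw [P.x_pow i]
      exact Subalgebra.algebraMap_mem _ _
  ------------------------------------------------------------------
  -- the parametrized elements
  set pol : (Fin n → Fin d → F) → Fin n → Polynomial F :=
    fun gg k => ∑ a : Fin d, Polynomial.C (gg k a) * Polynomial.X ^ (a : ℕ) with hpol
  set W : (Fin n → Fin d → F) → Fin n → A :=
    fun gg k => aeval (P.x k) (pol gg k) * P.y k * Tl ((k : ℕ) + 1) with hWdef
  have hsXW : ∀ gg (k : Fin n), SRel ρ (Tl 0) (W gg k) := by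
    intro gg k
    have c1 : SRel (1 : F) (Tl 0) (aeval (P.x k) (pol gg k)) :=
      SRel.one_of_commute (commute_aeval ((hcxT k 0).symm) _)
    have c2 : SRel ρ (Tl 0) (P.y k) := ((hsyX0 k).inv hρi0).of_scalar_eq (inv_inv ρ)
    have c3 : SRel (1 : F) (Tl 0) (Tl ((k : ℕ) + 1)) := SRel.one_of_commute (hcTT 0 _)
    exact ((c1.mul_right c2).mul_right c3).of_scalar_eq (by ring)
  have hsWW : ∀ gg (l k : Fin n), (l : ℕ) < (k : ℕ) → SRel ρ (W gg l) (W gg k) := by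
    intro gg l k hlk
    have hne : l ≠ k := fun h => by rw [h] at hlk; omega
    have hcxWk : Commute (P.x l) (W gg k) :=
      ((commute_aeval (hcxx l k) _).mul_right (P.xy_comm l k hne)).mul_right (hcxT l _)
    have c1 : SRel (1 : F) (aeval (P.x l) (pol gg l)) (W gg k) :=
      SRel.one_of_commute (commute_aeval hcxWk.symm _).symm
    have c2 : SRel (1 : F) (P.y l) (W gg k) :=
      SRel.one_of_commute (((commute_aeval ((P.xy_comm k l hne.symm).symm) _).mul_right
        (P.yy_comm l k hne)).mul_right (hcyT l _ (by omega)))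
    have c3 : SRel ρ (Tl ((l : ℕ) + 1)) (W gg k) := by
      have d1 : SRel (1 : F) (Tl ((l : ℕ) + 1)) (aeval (P.x k) (pol gg k)) :=
        SRel.one_of_commute (commute_aeval ((hcxT k _).symm) _)
      have d2 : SRel ρ (Tl ((l : ℕ) + 1)) (P.y k) :=
        ((hsyT1 k ((l : ℕ) + 1) (by omega)).inv hρi0).of_scalar_eq (inv_inv ρ)
      have d3 : SRel (1 : F) (Tl ((l : ℕ) + 1)) (Tl ((k : ℕ) + 1)) :=
        SRel.one_of_commute (hcTT _ _)
      exact ((d1.mul_right d2).mul_right d3).of_scalar_eq (by ring)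
    exact ((c1.mul_left c2).mul_left c3).of_scalar_eq (by ring)
  have hWd : ∀ gg (k : Fin n), (W gg k) ^ d ∈ (⊥ : Subalgebra F A) := by
    intro gg k
    have hcomm : Commute (aeval (P.x k) (pol gg k) * P.y k) (Tl ((k : ℕ) + 1)) :=
      Commute.mul_left (commute_aeval ((hcxT k _).symm) _).symm (hcyT k _ (by omega))
    show (aeval (P.x k) (pol gg k) * P.y k * Tl ((k : ℕ) + 1)) ^ d ∈ (⊥ : Subalgebra F A)
    rw [hcomm.mul_pow]
    refine mul_mem (aeval_mul_y_pow_mem hd0 (hsyx k) ?_ ?_ (P.x_pow k) (P.y_pow k) _) (hTd _)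
    · rw [inv_pow, hρ.pow_eq_one, inv_one]
    · intro m hm
      exact (hρ.inv.pow_eq_one_iff_dvd m).1 hm
  ------------------------------------------------------------------
  -- the key power computation
  have key : ∀ (cc : F) gg (m : ℕ), m ≤ n →
      (cc • Tl 0 + ∑ k ∈ Finset.univ.filter (fun k : Fin n => (k : ℕ) < m), W gg k) ^ d
        = cc ^ d • (Tl 0) ^ d
          + ∑ k ∈ Finset.univ.filter (fun k : Fin n => (k : ℕ) < m), (W gg k) ^ d := by
    intro cc gg m
    induction m with
    | zero =>
      intro _
      have he : Finset.univ.filter (fun k : Fin n => (k : ℕ) < 0) = ∅ := by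
        ext k; simp
      rw [he, Finset.sum_empty, Finset.sum_empty, add_zero, add_zero, _root_.smul_pow]
    | succ m ih =>
      intro hm1
      have hmn : m < n := by omega
      have hfil : Finset.univ.filter (fun k : Fin n => (k : ℕ) < m + 1)
          = insert (⟨m, hmn⟩ : Fin n)
            (Finset.univ.filter (fun k : Fin n => (k : ℕ) < m)) := by
        ext k
        simp only [Finset.mem_filter, Finset.mem_univ, true_and, Finset.mem_insert, Fin.ext_iff]
        omega
      have hnm : (⟨m, hmn⟩ : Fin n) ∉ Finset.univ.filter (fun k : Fin n => (k : ℕ) < m) := by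
        simp
      have hrel : SRel ρ
          (cc • Tl 0 + ∑ k ∈ Finset.univ.filter (fun k : Fin n => (k : ℕ) < m), W gg k)
          (W gg ⟨m, hmn⟩) :=
        SRel.add_left ((hsXW gg _).smul_left cc)
          (SRel.sum_left fun k hk => hsWW gg k _ (by
            simp only [Finset.mem_filter, Finset.mem_univ, true_and] at hk; exact hk))
      have hq := q_freshman hd0 hρ hrel
      rw [hfil, Finset.sum_insert hnm, Finset.sum_insert hnm,
        show cc • Tl 0 + (W gg ⟨m, hmn⟩
              + ∑ k ∈ Finset.univ.filter (fun k : Fin n => (k : ℕ) < m), W gg k)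
            = (cc • Tl 0 + ∑ k ∈ Finset.univ.filter (fun k : Fin n => (k : ℕ) < m), W gg k)
              + W gg ⟨m, hmn⟩ by abel,
        hq, ih (by omega)]
      abel
  ------------------------------------------------------------------
  -- the span is contained in the parametrized set
  have haddpol : ∀ gg gg' (k : Fin n), pol (gg + gg') k = pol gg k + pol gg' k := by
    intro gg gg' k
    simp only [hpol, Pi.add_apply, map_add, add_mul, Finset.sum_add_distrib]
  have haddW : ∀ gg gg' (k : Fin n), W (gg + gg') k = W gg k + W gg' k := by
    intro gg gg' k
    simp only [hWdef, haddpol, map_add, add_mul]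
  have hsmulpol : ∀ (t : F) gg (k : Fin n), pol (t • gg) k = Polynomial.C t * pol gg k := by
    intro t gg k
    simp only [hpol, Pi.smul_apply, smul_eq_mul, Finset.mul_sum, map_mul, mul_assoc]
  have hsmulW : ∀ (t : F) gg (k : Fin n), W (t • gg) k = t • W gg k := by
    intro t gg k
    simp only [hWdef, hsmulpol]
    rw [map_mul, aeval_C, ← Algebra.smul_def, smul_mul_assoc, smul_mul_assoc]
  have hzeroW : ∀ k : Fin n, W 0 k = 0 := by
    intro k
    have hp0 : pol 0 k = 0 := by simp [hpol]
    simp [hWdef, hp0]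
  let M : Submodule F A :=
    { carrier := {u : A | ∃ (cc : F) (gg : Fin n → Fin d → F), u = cc • Tl 0 + ∑ k : Fin n, W gg k}
      add_mem' := by
        rintro u v ⟨cu, gu, rfl⟩ ⟨cv, gv, rfl⟩
        exact ⟨cu + cv, gu + gv, by
          simp only [haddW, Finset.sum_add_distrib, add_smul]; abel⟩
      zero_mem' := ⟨0, 0, by simp [hzeroW]⟩
      smul_mem' := by
        rintro t u ⟨cu, gu, rfl⟩
        refine ⟨t * cu, t • gu, ?_⟩
        simp only [hsmulW]
        rw [← Finset.smul_sum, smul_add, smul_smul] }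
  have hsub : (insert (L.prod) {z : A | ∃ (k : Fin n) (a : Fin d),
      z = P.x k ^ (a : ℕ) * P.y k * (L.drop ((k : ℕ) + 1)).prod} : Set A) ⊆ ↑M := by
    intro z hz
    rcases Set.mem_insert_iff.1 hz with rfl | hz2
    · exact ⟨1, 0, by simp [hzeroW, hX0T]⟩
    · obtain ⟨k, a, rfl⟩ := hz2
      set gg1 : Fin n → Fin d → F := fun k' a' => if k' = k ∧ a' = a then (1 : F) else 0
        with hgg1
      refine ⟨0, gg1, ?_⟩
      have hpolval : ∀ k' : Fin n,
          pol gg1 k' = if k' = k then Polynomial.X ^ (a : ℕ) else 0 := by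
        intro k'
        simp only [hpol, hgg1]
        by_cases h : k' = k
        · subst h
          rw [if_pos rfl, Finset.sum_eq_single a (fun b _ hb => by
              rw [if_neg (fun hc => hb hc.2), map_zero, zero_mul])
            (fun ha => absurd (Finset.mem_univ a) ha)]
          rw [if_pos ⟨rfl, rfl⟩, map_one, one_mul]
        · rw [if_neg h]
          exact Finset.sum_eq_zero fun b _ => by
            rw [if_neg (fun hc => h hc.1), map_zero, zero_mul]
      have hWval : ∀ k' : Fin n,
          W gg1 k' = if k' = k then P.x k ^ (a : ℕ) * P.y k * Tl ((k : ℕ) + 1) else 0 := by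
        intro k'
        show aeval (P.x k') (pol gg1 k') * P.y k' * Tl ((k' : ℕ) + 1) = _
        rw [hpolval]
        by_cases h : k' = k
        · subst h; rw [if_pos rfl, if_pos rfl, aeval_X_pow]
        · rw [if_neg h, if_neg h, map_zero, zero_mul, zero_mul]
      show P.x k ^ (a : ℕ) * P.y k * (L.drop ((k : ℕ) + 1)).prod
          = (0 : F) • Tl 0 + ∑ k' : Fin n, W gg1 k'
      rw [Finset.sum_congr rfl fun k' _ => hWval k', Finset.sum_ite_eq' Finset.univ k,
        if_pos (Finset.mem_univ k), zero_smul, zero_add, hTb]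
  ------------------------------------------------------------------
  constructor
  · -- Kummer property
    intro u hu
    have hu2 : ∃ cc gg, u = cc • Tl 0 + ∑ k : Fin n, W gg k :=
      Submodule.span_le.2 hsub hu
    obtain ⟨cc, gg, rfl⟩ := hu2
    have hfiln : Finset.univ.filter (fun k : Fin n => (k : ℕ) < n) = Finset.univ := by
      ext k; simp [k.isLt]
    have hk := key cc gg n le_rfl
    rw [hfiln] at hk
    rw [← Algebra.mem_bot (R := F), hk]
    exact add_mem (Subalgebra.smul_mem _ (hTd 0) _) (Subalgebra.sum_mem _ fun k _ => hWd gg k)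
  · -- dimension
    set v : Option (Fin n × Fin d) → A := fun o => Option.elim o (Tl 0)
      (fun p => P.x p.1 ^ ((p.2 : Fin d) : ℕ) * P.y p.1 * Tl ((p.1 : ℕ) + 1)) with hv
    have hvnone : v none = Tl 0 := rfl
    have hvsome : ∀ (k : Fin n) (a : Fin d),
        v (some (k, a)) = P.x k ^ (a : ℕ) * P.y k * Tl ((k : ℕ) + 1) := fun k a => rfl
    have hsetv : (insert (L.prod) {z : A | ∃ (k : Fin n) (a : Fin d),
        z = P.x k ^ (a : ℕ) * P.y k * (L.drop ((k : ℕ) + 1)).prod} : Set A)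
          = Set.range v := by
      ext z
      constructor
      · intro hz
        rcases Set.mem_insert_iff.1 hz with rfl | ⟨k, a, rfl⟩
        · exact ⟨none, hvnone.trans hX0T.symm⟩
        · exact ⟨some (k, a), by rw [hvsome, hTb]⟩
      · rintro ⟨o, rfl⟩
        rcases o with _ | ⟨k, a⟩
        · exact Set.mem_insert_iff.2 (Or.inl (hvnone.trans hX0T.symm))
        · exact Set.mem_insert_iff.2 (Or.inr ⟨k, a, by rw [hvsome, hTb]⟩)
    have hvne : ∀ o, v o ≠ 0 := by
      intro o
      rcases o with _ | ⟨k, a⟩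
      · exact hTne 0
      · exact mul_ne_zero (mul_ne_zero (pow_ne_zero _ (hx_ne k)) (hy_ne k)) (hTne _)
    have hEx : ∀ (j : Fin n) o, conjEnd F (P.x j) (v o)
        = (Option.elim o (1 : F) fun p => if p.1 = j then ρ else 1) • v o := by
      intro j o
      rcases o with _ | ⟨k, a⟩
      · exact conjEnd_eigen (SRel.one_of_commute (hcxT j 0)) (hx_ne j)
      · show conjEnd F (P.x j) (P.x k ^ (a : ℕ) * P.y k * Tl ((k : ℕ) + 1))
          = (if k = j then ρ else 1) • (P.x k ^ (a : ℕ) * P.y k * Tl ((k : ℕ) + 1))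
        have c1 : SRel ((1 : F) ^ (a : ℕ)) (P.x j) (P.x k ^ (a : ℕ)) :=
          (SRel.one_of_commute (hcxx j k)).pow_right _
        have c3 : SRel (1 : F) (P.x j) (Tl ((k : ℕ) + 1)) := SRel.one_of_commute (hcxT j _)
        by_cases h : k = j
        · subst h
          rw [conjEnd_eigen (((c1.mul_right (P.xy_rel k : SRel ρ _ _)).mul_right c3).of_scalar_eq
            (show (1 : F) ^ (a : ℕ) * ρ * 1 = ρ by ring)) (hx_ne k), if_pos rfl]
        · rw [conjEnd_eigen (((c1.mul_right (SRel.one_of_commute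
              (P.xy_comm j k fun hh => h hh.symm))).mul_right c3).of_scalar_eq
            (show (1 : F) ^ (a : ℕ) * 1 * 1 = 1 by ring)) (hx_ne j), if_neg h]
    have hEy : ∀ (j : Fin n) o, conjEnd F (P.y j) (v o)
        = (Option.elim o (ρ⁻¹ : F) fun p => if p.1 = j then (ρ⁻¹) ^ ((p.2 : Fin d) : ℕ)
            else if (p.1 : ℕ) < (j : ℕ) then ρ⁻¹ else 1) • v o := by
      intro j o
      rcases o with _ | ⟨k, a⟩
      · exact conjEnd_eigen (hsyX0 j) (hy_ne j)
      · show conjEnd F (P.y j) (P.x k ^ (a : ℕ) * P.y k * Tl ((k : ℕ) + 1))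
          = (if k = j then (ρ⁻¹) ^ (a : ℕ) else if (k : ℕ) < (j : ℕ) then ρ⁻¹ else 1)
              • (P.x k ^ (a : ℕ) * P.y k * Tl ((k : ℕ) + 1))
        by_cases h : k = j
        · subst h
          have c1 : SRel ((ρ⁻¹ : F) ^ (a : ℕ)) (P.y k) (P.x k ^ (a : ℕ)) :=
            (hsyx k).pow_right _
          have c2 : SRel (1 : F) (P.y k) (P.y k) := SRel.one_of_commute (Commute.refl _)
          have c3 : SRel (1 : F) (P.y k) (Tl ((k : ℕ) + 1)) :=
            SRel.one_of_commute (hcyT k _ (by omega))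
          rw [conjEnd_eigen (((c1.mul_right c2).mul_right c3).of_scalar_eq
            (show (ρ⁻¹ : F) ^ (a : ℕ) * 1 * 1 = (ρ⁻¹) ^ (a : ℕ) by ring)) (hy_ne k), if_pos rfl]
        · have hne : k ≠ j := h
          have c1 : SRel ((1 : F) ^ (a : ℕ)) (P.y j) (P.x k ^ (a : ℕ)) :=
            (SRel.one_of_commute (P.xy_comm k j hne).symm).pow_right _
          have c2 : SRel (1 : F) (P.y j) (P.y k) :=
            SRel.one_of_commute (P.yy_comm j k fun hh => hne hh.symm)
          by_cases hlt : (k : ℕ) < (j : ℕ)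
          · have c3 : SRel (ρ⁻¹ : F) (P.y j) (Tl ((k : ℕ) + 1)) :=
              hsyT1 j ((k : ℕ) + 1) (by omega)
            rw [conjEnd_eigen (((c1.mul_right c2).mul_right c3).of_scalar_eq
              (show (1 : F) ^ (a : ℕ) * 1 * ρ⁻¹ = ρ⁻¹ by ring)) (hy_ne j), if_neg h,
              if_pos hlt]
          · have hjk : (j : ℕ) < (k : ℕ) + 1 := by
              rcases Nat.lt_or_ge (j : ℕ) ((k : ℕ) + 1) with hh | hh
              · exact hh
              · omega
            have c3 : SRel (1 : F) (P.y j) (Tl ((k : ℕ) + 1)) :=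
              SRel.one_of_commute (hcyT j _ hjk)
            rw [conjEnd_eigen (((c1.mul_right c2).mul_right c3).of_scalar_eq
              (show (1 : F) ^ (a : ℕ) * 1 * 1 = 1 by ring)) (hy_ne j), if_neg h, if_neg hlt]
    have hsep : ∀ i i', i ≠ i' → ∃ (T : Module.End F A) (μ : Option (Fin n × Fin d) → F),
        (∀ i'', T (v i'') = μ i'' • v i'') ∧ μ i ≠ μ i' := by
      intro i i' hne
      rcases i with _ | ⟨k, a⟩ <;> rcases i' with _ | ⟨k', a'⟩
      · exact absurd rfl hne
      · refine ⟨conjEnd F (P.x k'), _, hEx k', ?_⟩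
        simp only [Option.elim, if_pos rfl]
        exact fun hh => hρ1 hh.symm
      · refine ⟨conjEnd F (P.x k), _, hEx k, ?_⟩
        simp only [Option.elim, if_pos rfl]
        exact hρ1
      · by_cases hkk : k = k'
        · subst hkk
          have haa : a ≠ a' := fun hh => hne (by rw [hh])
          refine ⟨conjEnd F (P.y k), _, hEy k, ?_⟩
          simp only [Option.elim, if_pos rfl]
          intro hh
          exact haa (Fin.ext (hρ.inv.pow_inj a.isLt a'.isLt hh))
        · refine ⟨conjEnd F (P.x k), _, hEx k, ?_⟩
          simp only [Option.elim, if_pos rfl, if_neg (fun hh => hkk (hh : k' = k).symm)]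
          exact hρ1
    have hindep : LinearIndependent F v := linearIndependent_of_sep v hvne hsep
    rw [hsetv, finrank_span_eq_card hindep]
    simp only [Fintype.card_option, Fintype.card_prod, Fintype.card_fin]
    ring
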